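/- Let J ≥ 1 be an integer, P a Borel probability measure on C([0,1]), x ∈ C([0,1]), and X_1, X_2, … an i.i.d. sequence of random elements of C([0,1]) with law P. Then, almost surely, |D_{J,n}(x) − D_J(x, P)| → 0 as n → ∞. -/

import Mathlib

open MeasureTheory Filter Topology
open scoped ENNReal

noncomputable section

abbrev I01 : Set ℝ := Set.Icc 0 1

abbrev CI := C(I01, ℝ)

noncomputable instance : MeasurableSpace CI := borel CI
instance : BorelSpace CI := ⟨rfl⟩

/-- The graph of a continuous function on `[0,1]`, as a subset of `ℝ²`. -/
def graph (x : CI) : Set (ℝ × ℝ) := Set.range fun t : I01 => ((t : ℝ), x t)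

/-- The area (2-dimensional Lebesgue measure) of the convex hull of a set in `ℝ²`. -/
def ach (A : Set (ℝ × ℝ)) : ℝ := (volume (convexHull ℝ A)).toReal

/-- Ratio of the area of the convex hull of the graphs of a batch of curves to the area of
the convex hull once `x` is added (`0/0 = 0` convention, as division by zero is zero). -/
def achRatio {m : ℕ} (xs : Fin m → CI) (x : CI) : ℝ :=
  ach (⋃ i, graph (xs i)) / ach ((⋃ i, graph (xs i)) ∪ graph x)

/-- The ACH depth of degree `J` of `x` w.r.t. `P`. -/
def ACHDepth (J : ℕ) (P : Measure CI) (x : CI) : ℝ :=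
  ∫ xs, achRatio xs x ∂(Measure.pi fun _ : Fin J => P)

/-- The average ACH depth of degree `J`. -/
def avgACHDepth (J : ℕ) (P : Measure CI) (x : CI) : ℝ :=
  (J : ℝ)⁻¹ * ∑ j ∈ Finset.Icc 1 J, ACHDepth j P x

/-- A curve is non-constant. -/
def Nonconstant (x : CI) : Prop := ¬ ∃ c : ℝ, ∀ t, x t = c

/-- The empirical ACH depth (`U`-statistic of degree `J`) based on the first `n` curves. -/
def empDepth (J n : ℕ) (X : ℕ → CI) (x : CI) : ℝ :=
  (n.choose J : ℝ)⁻¹ * ∑ s ∈ Finset.powersetCard J (Finset.range n),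
    ach (⋃ i ∈ s, graph (X i)) / ach ((⋃ i ∈ s, graph (X i)) ∪ graph x)

/-- The average empirical ACH depth. -/
def avgEmpDepth (J n : ℕ) (X : ℕ → CI) (x : CI) : ℝ :=
  (J : ℝ)⁻¹ * ∑ j ∈ Finset.Icc 1 J, empDepth j n X x

/-- The band delimited by a finite family of curves. -/
def band {m : ℕ} (xs : Fin m → CI) : Set (ℝ × ℝ) :=
  {p | ∃ t : I01, p.1 = (t : ℝ) ∧ (⨅ i, xs i t) ≤ p.2 ∧ p.2 ≤ ⨆ i, xs i t}

/-! ### Auxiliary material -/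

section Aux

open Metric Set Finset

/-! #### Geometry and measurability of the kernel -/

lemma isCompact_graph (x : CI) : IsCompact (graph x) := isCompact_range (by fun_prop)

lemma thickening_smono {α : Type*} [PseudoEMetricSpace α] {s t : Set α} (h : s ⊆ t) (δ : ℝ) :
    Metric.thickening δ s ⊆ Metric.thickening δ t := fun _ hx =>
  Metric.mem_thickening_iff_infEdist_lt.2
    (lt_of_le_of_lt (EMetric.infEdist_anti h) (Metric.mem_thickening_iff_infEdist_lt.1 hx))

lemma graph_subset_thickening {x y : CI} {ε : ℝ} (h : dist x y < ε) :
    graph x ⊆ thickening ε (graph y) := by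
  rintro p ⟨t, rfl⟩
  refine mem_thickening_iff.2 ⟨((t : ℝ), y t), ⟨t, rfl⟩, ?_⟩
  have : dist ((t : ℝ), x t) ((t : ℝ), y t) = dist (x t) (y t) := by
    simp [Prod.dist_eq, dist_nonneg]
  rw [this]
  exact lt_of_le_of_lt (ContinuousMap.dist_apply_le_dist t) h

lemma volume_cthick_ne_top {A : Set (ℝ × ℝ)} (hA : Bornology.IsBounded A) {ε : ℝ} :
    volume (cthickening ε (closure (convexHull ℝ A))) ≠ ⊤ :=
  ((isBounded_convexHull.2 hA).closure.cthickening).measure_lt_top.ne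

lemma volume_convexHull_ne_top {A : Set (ℝ × ℝ)} (hA : Bornology.IsBounded A) :
    volume (convexHull ℝ A) ≠ ⊤ :=
  ((isBounded_convexHull.2 hA).measure_lt_top).ne

set_option maxHeartbeats 1000000 in
lemma usc_achE (m : ℕ) :
    UpperSemicontinuous (fun xs : Fin m → CI => volume (convexHull ℝ (⋃ i, graph (xs i)))) := by
  intro xs c hc
  set K : Set (ℝ × ℝ) := ⋃ i, graph (xs i) with hK
  have hKb : Bornology.IsBounded K :=
    (isCompact_iUnion (fun i => isCompact_graph (xs i))).isBounded
  set C : Set (ℝ × ℝ) := convexHull ℝ K with hC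
  have hclos : volume (closure C) = volume C := by
    refine le_antisymm ?_ (measure_mono subset_closure)
    calc volume (closure C) ≤ volume (C ∪ frontier C) :=
          measure_mono fun p hp => or_iff_not_imp_left.2
            (fun hpC => ⟨hp, fun hi => hpC (interior_subset hi)⟩)
        _ ≤ volume C + volume (frontier C) := measure_union_le _ _
        _ = volume C := by rw [(convex_convexHull ℝ K).addHaar_frontier volume, add_zero]
  have htends : Tendsto (fun ε => volume (cthickening ε (closure C))) (𝓝 (0:ℝ))
      (𝓝 (volume (closure C))) :=
    tendsto_measure_cthickening_of_isClosed
      ⟨1, one_pos, volume_cthick_ne_top hKb⟩ isClosed_closure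
  have hev : ∀ᶠ ε in 𝓝 (0:ℝ), volume (cthickening ε (closure C)) < c := by
    apply htends.eventually_lt_const; rwa [hclos]
  obtain ⟨ε, hεlt, hεpos⟩ := ((hev.filter_mono nhdsWithin_le_nhds).and
    (self_mem_nhdsWithin (s := Set.Ioi (0:ℝ)))).exists
  have hεpos' : (0:ℝ) < ε := hεpos
  filter_upwards [Metric.ball_mem_nhds xs hεpos'] with ys hys
  have hsub : convexHull ℝ (⋃ i, graph (ys i)) ⊆ cthickening ε (closure C) := by
    rw [cthickening_closure]
    refine (convexHull_min ?_ ((convex_convexHull ℝ K).thickening ε)).trans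
      (thickening_subset_cthickening ε C)
    refine iUnion_subset fun i => ?_
    have h1 : graph (ys i) ⊆ thickening ε (graph (xs i)) :=
      graph_subset_thickening (lt_of_le_of_lt (dist_le_pi_dist ys xs i) hys)
    have h2 : graph (xs i) ⊆ C :=
      (subset_iUnion (fun j => graph (xs j)) i).trans (subset_convexHull ℝ K)
    exact h1.trans (thickening_smono h2 ε)
  exact lt_of_le_of_lt (measure_mono hsub) hεlt

lemma measurable_ach (m : ℕ) :
    Measurable (fun xs : Fin m → CI => ach (⋃ i, graph (xs i))) :=
  ((usc_achE m).measurable).ennreal_toReal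

lemma union_graph_snoc {m : ℕ} (xs : Fin m → CI) (x : CI) :
    (⋃ i, graph ((Fin.snoc xs x : Fin (m+1) → CI) i)) = (⋃ i, graph (xs i)) ∪ graph x := by
  ext p
  simp only [Set.mem_iUnion, Set.mem_union]
  constructor
  · rintro ⟨i, hi⟩
    induction i using Fin.lastCases with
    | last => right; simpa [Fin.snoc_last] using hi
    | cast j => left; exact ⟨j, by simpa [Fin.snoc_castSucc] using hi⟩
  · rintro (⟨j, hj⟩ | hx)
    · exact ⟨j.castSucc, by simpa [Fin.snoc_castSucc] using hj⟩
    · exact ⟨Fin.last m, by simpa [Fin.snoc_last] using hx⟩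

lemma measurable_achRatio (m : ℕ) (x : CI) :
    Measurable (fun xs : Fin m → CI => achRatio xs x) := by
  apply Measurable.div (measurable_ach m)
  have h1 : Measurable (fun xs : Fin m → CI => (Fin.snoc xs x : Fin (m+1) → CI)) := by
    apply measurable_pi_lambda
    intro i
    induction i using Fin.lastCases with
    | last => simp only [Fin.snoc_last]; exact measurable_const
    | cast j => simp only [Fin.snoc_castSucc]; exact measurable_pi_apply j
  have h2 := (measurable_ach (m+1)).comp h1
  simp only [Function.comp_def, union_graph_snoc] at h2
  exact h2

lemma ach_ratio_mem_Icc {A B : Set (ℝ × ℝ)} (hB : Bornology.IsBounded B) (hAB : A ⊆ B) :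
    ach A / ach B ∈ Set.Icc (0:ℝ) 1 := by
  refine ⟨div_nonneg ENNReal.toReal_nonneg ENNReal.toReal_nonneg, ?_⟩
  refine div_le_one_of_le₀ ?_ ENNReal.toReal_nonneg
  exact ENNReal.toReal_mono (volume_convexHull_ne_top hB)
    (measure_mono (convexHull_mono hAB))

lemma achRatio_mem_Icc {m : ℕ} (xs : Fin m → CI) (x : CI) :
    achRatio xs x ∈ Set.Icc (0:ℝ) 1 :=
  ach_ratio_mem_Icc
    (((isCompact_iUnion (fun i => isCompact_graph (xs i))).union (isCompact_graph x)).isBounded)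
    Set.subset_union_left

lemma summand_mem_Icc (g : ℕ → CI) (x : CI) (s : Finset ℕ) :
    ach (⋃ i ∈ s, graph (g i)) / ach ((⋃ i ∈ s, graph (g i)) ∪ graph x)
      ∈ Set.Icc (0:ℝ) 1 := by
  refine ach_ratio_mem_Icc ?_ Set.subset_union_left
  refine (((s.finite_toSet).isCompact_biUnion (fun i _ => isCompact_graph (g i))).union
    (isCompact_graph x)).isBounded

/-! #### Combinatorics -/

lemma pascal_le (m J : ℕ) : m.choose J ≤ (m-1).choose J + (m-1).choose (J-1) := by
  cases m with
  | zero => simpa using Nat.le_add_right _ _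
  | succ m' =>
    cases J with
    | zero => simp
    | succ J' =>
      simp only [Nat.succ_sub_one]
      rw [Nat.choose_succ_succ']
      omega

lemma choose_telescope (k n J : ℕ) :
    n.choose J ≤ (n - k).choose J + k * (n-1).choose (J-1) := by
  induction k with
  | zero => simp
  | succ k ih =>
    have h1 : (n - k).choose J ≤ (n - k - 1).choose J + (n - k - 1).choose (J-1) :=
      pascal_le _ _
    have h2 : (n - k - 1).choose (J-1) ≤ (n-1).choose (J-1) :=
      Nat.choose_le_choose _ (by omega)
    have h3 : n - (k+1) = n - k - 1 := by omega
    rw [h3]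
    calc n.choose J ≤ (n - k).choose J + k * (n-1).choose (J-1) := ih
      _ ≤ ((n - k - 1).choose J + (n-1).choose (J-1)) + k * (n-1).choose (J-1) :=
          Nat.add_le_add (h1.trans (Nat.add_le_add_left h2 _)) le_rfl
      _ = (n - k - 1).choose J + (k+1) * (n-1).choose (J-1) := by ring

lemma choose_identity {n J : ℕ} (hJ : 1 ≤ J) (hn : 1 ≤ n) :
    n * ((n-1).choose (J-1)) = n.choose J * J := by
  have h := Nat.add_one_mul_choose_eq (n-1) (J-1)
  have h1 : n - 1 + 1 = n := by omega
  have h2 : J - 1 + 1 = J := by omega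
  rw [h1, h2] at h
  exact h

lemma choose_ratio_bound {J m n : ℕ} (hJ : 1 ≤ J) (hJn : J ≤ n) (hmn : m ≤ n) :
    ((n.choose J : ℝ) - m.choose J) / (n.choose J) ≤ J * ((n : ℝ) - m) / n := by
  have hn : 1 ≤ n := hJ.trans hJn
  have hN : 0 < (n.choose J : ℝ) := by exact_mod_cast Nat.choose_pos hJn
  have hnR : 0 < (n : ℝ) := by exact_mod_cast hn
  rw [div_le_div_iff₀ hN hnR]
  have htel := choose_telescope (n - m) n J
  have hm : n - (n - m) = m := by omega
  rw [hm] at htel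
  have htelR : (n.choose J : ℝ) - m.choose J ≤ (n - m : ℕ) * ((n-1).choose (J-1)) := by
    have h4 : (n.choose J : ℝ) ≤ m.choose J + (n - m : ℕ) * ((n-1).choose (J-1)) := by
      exact_mod_cast htel
    linarith
  have hid : (n : ℝ) * ((n-1).choose (J-1)) = n.choose J * J := by
    exact_mod_cast choose_identity hJ hn
  have hcast : ((n - m : ℕ) : ℝ) = (n : ℝ) - m := by
    push_cast [Nat.cast_sub hmn]; ring
  calc ((n.choose J : ℝ) - m.choose J) * n ≤ ((n - m : ℕ) * ((n-1).choose (J-1))) * n :=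
        mul_le_mul_of_nonneg_right htelR hnR.le
    _ = ((n - m : ℕ) : ℝ) * ((n : ℝ) * ((n-1).choose (J-1))) := by ring
    _ = ((n : ℝ) - m) * ((n.choose J : ℝ) * J) := by rw [hcast, hid]
    _ = (J : ℝ) * ((n : ℝ) - m) * (n.choose J) := by ring

lemma count_disjoint {J n : ℕ} {s : Finset ℕ} (hs : s ∈ powersetCard J (range n)) :
    ((powersetCard J (range n)).filter (fun t => Disjoint s t)).card = (n - J).choose J := by
  obtain ⟨hsub, hcard⟩ := mem_powersetCard.1 hs
  have h : (powersetCard J (range n)).filter (fun t => Disjoint s t)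
      = powersetCard J (range n \ s) := by
    ext t
    simp only [mem_filter, mem_powersetCard, Finset.subset_sdiff]
    rw [disjoint_comm]; tauto
  rw [h, card_powersetCard, card_sdiff_of_subset hsub, card_range, hcard]

/-! #### Deterministic interpolation bound -/

lemma empDepth_diff {J m n : ℕ} (hJ : 1 ≤ J) (hJm : J ≤ m) (hmn : m ≤ n)
    (g : ℕ → CI) (x : CI) :
    |empDepth J n g x - empDepth J m g x| ≤ 2 * ((J:ℝ) * ((n:ℝ) - m) / n) := by
  classical
  set a : Finset ℕ → ℝ := fun s =>
    ach (⋃ i ∈ s, graph (g i)) / ach ((⋃ i ∈ s, graph (g i)) ∪ graph x) with ha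
  have ha01 : ∀ s, a s ∈ Set.Icc (0:ℝ) 1 := fun s => summand_mem_Icc g x s
  set q : ℝ := (m.choose J : ℝ) with hqdef
  set r : ℝ := (n.choose J : ℝ) with hrdef
  have hq : 0 < q := by rw [hqdef]; exact_mod_cast Nat.choose_pos hJm
  have hr : 0 < r := by rw [hrdef]; exact_mod_cast Nat.choose_pos (hJm.trans hmn)
  have hqr : q ≤ r := by rw [hqdef, hrdef]; exact_mod_cast Nat.choose_le_choose J hmn
  have hsub : powersetCard J (range m) ⊆ powersetCard J (range n) :=
    powersetCard_mono (by exact range_subset_range.2 hmn)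
  set Sm : ℝ := ∑ s ∈ powersetCard J (range m), a s with hSm
  set Sn : ℝ := ∑ s ∈ powersetCard J (range n), a s with hSn
  set Sd : ℝ := ∑ s ∈ powersetCard J (range n) \ powersetCard J (range m), a s with hSd
  have hsplit : Sd + Sm = Sn := by
    rw [hSd, hSm, hSn, Finset.sum_sdiff hsub]
  have hSm0 : 0 ≤ Sm := Finset.sum_nonneg fun s _ => (ha01 s).1
  have hSd0 : 0 ≤ Sd := Finset.sum_nonneg fun s _ => (ha01 s).1
  have hcard_bound : ∀ (u : Finset (Finset ℕ)), (∑ s ∈ u, a s) ≤ u.card := by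
    intro u
    calc (∑ s ∈ u, a s) ≤ ∑ s ∈ u, (1:ℝ) := Finset.sum_le_sum fun s _ => (ha01 s).2
      _ = u.card := by simp
  have hSmq : Sm ≤ q := by
    have := hcard_bound (powersetCard J (range m))
    rwa [card_powersetCard, card_range] at this
  have hSdb : Sd ≤ r - q := by
    have h1 := hcard_bound (powersetCard J (range n) \ powersetCard J (range m))
    rw [Finset.card_sdiff_of_subset hsub, card_powersetCard, card_powersetCard,
      card_range, card_range] at h1
    have hnat : (m.choose J) ≤ (n.choose J) := Nat.choose_le_choose J hmn
    calc Sd ≤ ((n.choose J - m.choose J : ℕ) : ℝ) := h1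
      _ = r - q := by rw [Nat.cast_sub hnat]
  have hdef_n : empDepth J n g x = r⁻¹ * Sn := rfl
  have hdef_m : empDepth J m g x = q⁻¹ * Sm := rfl
  rw [hdef_n, hdef_m]
  have heq : r⁻¹ * Sn - q⁻¹ * Sm = (Sn * q - Sm * r) / (r * q) := by
    field_simp
  have habs : |Sn * q - Sm * r| ≤ 2 * ((r - q) * q) := by
    rw [abs_le]
    constructor
    · nlinarith [mul_nonneg hSd0 hq.le,
        mul_le_mul_of_nonneg_right hSmq (sub_nonneg.2 hqr)]
    · nlinarith [mul_le_mul_of_nonneg_right hSdb hq.le,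
        mul_nonneg hSm0 (sub_nonneg.2 hqr)]
  have hkey : |r⁻¹ * Sn - q⁻¹ * Sm| ≤ 2 * ((r - q) / r) := by
    rw [heq, abs_div, abs_of_pos (mul_pos hr hq), div_le_iff₀ (mul_pos hr hq)]
    calc |Sn * q - Sm * r| ≤ 2 * ((r - q) * q) := habs
      _ = 2 * ((r - q) / r) * (r * q) := by field_simp
  refine hkey.trans ?_
  have := choose_ratio_bound hJ (hJm.trans hmn) hmn
  have h2 : (r - q) / r ≤ (J:ℝ) * ((n:ℝ) - m) / n := this
  linarith

lemma empDepth_mem_Icc {J n : ℕ} (hJn : J ≤ n) (g : ℕ → CI) (x : CI) :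
    empDepth J n g x ∈ Set.Icc (0:ℝ) 1 := by
  have hN : 0 < ((n.choose J : ℕ) : ℝ) := by exact_mod_cast Nat.choose_pos hJn
  constructor
  · exact mul_nonneg (by positivity)
      (Finset.sum_nonneg fun s _ => (summand_mem_Icc g x s).1)
  · have hsum : (∑ s ∈ powersetCard J (range n),
        ach (⋃ i ∈ s, graph (g i)) / ach ((⋃ i ∈ s, graph (g i)) ∪ graph x))
        ≤ ((n.choose J : ℕ) : ℝ) := by
      calc (∑ s ∈ powersetCard J (range n),
            ach (⋃ i ∈ s, graph (g i)) / ach ((⋃ i ∈ s, graph (g i)) ∪ graph x))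
          ≤ ∑ _s ∈ powersetCard J (range n), (1:ℝ) :=
            Finset.sum_le_sum fun s _ => (summand_mem_Icc g x s).2
        _ = ((n.choose J : ℕ) : ℝ) := by
            simp [card_powersetCard, card_range]
    calc empDepth J n g x ≤ ((n.choose J : ℝ))⁻¹ * ((n.choose J : ℕ) : ℝ) := by
          exact mul_le_mul_of_nonneg_left hsum (by positivity)
      _ = 1 := by
          rw [inv_mul_cancel₀ hN.ne']

lemma biUnion_graph_eq {J : ℕ} (s : Finset ℕ) (hs : s.card = J) (g : ℕ → CI) :
    (⋃ i ∈ s, graph (g i)) = ⋃ k : Fin J, graph (g (s.orderEmbOfFin hs k)) := by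
  rw [← Finset.set_biUnion_coe, ← Finset.range_orderEmbOfFin s hs]
  exact Set.biUnion_range

lemma summand_eq_achRatio {J : ℕ} (s : Finset ℕ) (hs : s.card = J) (g : ℕ → CI) (x : CI) :
    ach (⋃ i ∈ s, graph (g i)) / ach ((⋃ i ∈ s, graph (g i)) ∪ graph x)
      = achRatio (fun k => g (s.orderEmbOfFin hs k)) x := by
  rw [achRatio, biUnion_graph_eq s hs g]

end Aux

section Prob

open Metric Set Finset

variable {Ω : Type} [MeasurableSpace Ω] {μ : Measure Ω} [IsProbabilityMeasure μ]

lemma integrable_of_bdd {f : Ω → ℝ} (hf : Measurable f) {C : ℝ} (h : ∀ ω, |f ω| ≤ C) :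
    Integrable f μ :=
  (integrable_const C).mono' hf.aestronglyMeasurable (Filter.Eventually.of_forall h)

set_option synthInstance.maxHeartbeats 1000000 in
lemma map_tuple_eq_pi {J : ℕ} {P : Measure CI} [IsProbabilityMeasure P]
    {X : ℕ → Ω → CI} (hmeas : ∀ i, Measurable (X i))
    (hlaw : ∀ i, Measure.map (X i) μ = P)
    (hindep : ProbabilityTheory.iIndepFun X μ)
    (e : Fin J → ℕ) (he : Function.Injective e) :
    Measure.map (fun ω (k : Fin J) => X (e k) ω) μ = Measure.pi fun _ => P := by
  classical
  have hT : Measurable fun ω (k : Fin J) => X (e k) ω :=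
    measurable_pi_lambda _ fun k => hmeas (e k)
  refine (Measure.pi_eq fun s hs => ?_).symm
  rw [Measure.map_apply hT (MeasurableSet.univ_pi hs)]
  have hpre : (fun ω (k : Fin J) => X (e k) ω) ⁻¹' (Set.pi Set.univ s)
      = ⋂ k, X (e k) ⁻¹' s k := by ext ω; simp [Set.mem_pi]
  rw [hpre]
  set sets : ℕ → Set CI := Function.extend e s (fun _ => Set.univ) with hsets
  have hse : ∀ k, sets (e k) = s k := fun k => he.extend_apply s _ k
  have hmeasets : ∀ i, i ∈ Finset.image e Finset.univ → MeasurableSet (sets i) := by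
    intro i hi
    obtain ⟨k, -, rfl⟩ := Finset.mem_image.1 hi
    rw [hse]; exact hs k
  have key := hindep.measure_inter_preimage_eq_mul (Finset.image e Finset.univ) hmeasets
  have hL : (⋂ i ∈ Finset.image e Finset.univ, X i ⁻¹' sets i) = ⋂ k, X (e k) ⁻¹' s k := by
    ext ω
    simp only [Set.mem_iInter, Finset.mem_image, Finset.mem_univ, true_and]
    constructor
    · intro h k; have h2 := h (e k) ⟨k, rfl⟩; rwa [hse] at h2
    · rintro h i ⟨k, rfl⟩; rw [hse]; exact h k
  have hR : (∏ i ∈ Finset.image e Finset.univ, μ (X i ⁻¹' sets i))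
      = ∏ k : Fin J, P (s k) := by
    rw [Finset.prod_image (fun k _ l _ h => he h)]
    refine Finset.prod_congr rfl fun k _ => ?_
    rw [hse, ← hlaw (e k), Measure.map_apply (hmeas (e k)) (hs k)]
  rw [hL, hR] at key
  exact key

lemma second_moment {n J : ℕ} (hJ : 1 ≤ J) (hJn : J ≤ n)
    (H : Finset ℕ → Ω → ℝ) (D : ℝ)
    (hmeasH : ∀ s ∈ powersetCard J (range n), Measurable (H s))
    (h01 : ∀ s ∈ powersetCard J (range n), ∀ ω, H s ω ∈ Set.Icc (0:ℝ) 1)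
    (hD : D ∈ Set.Icc (0:ℝ) 1)
    (hzero : ∀ s ∈ powersetCard J (range n), ∀ t ∈ powersetCard J (range n),
      Disjoint s t → ∫ ω, (H s ω - D) * (H t ω - D) ∂μ = 0) :
    ∫ ω, ((n.choose J : ℝ)⁻¹ * ∑ s ∈ powersetCard J (range n), H s ω - D)^2 ∂μ
      ≤ (J:ℝ)^2 / n := by
  classical
  set PJ := powersetCard J (range n) with hPJ
  set N : ℕ := n.choose J with hN
  have hNcard : PJ.card = N := by rw [hPJ, card_powersetCard, card_range]
  have hNpos : 0 < N := Nat.choose_pos hJn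
  have hNR : 0 < (N : ℝ) := by exact_mod_cast hNpos
  set f : Finset ℕ → Ω → ℝ := fun s ω => H s ω - D with hf
  have hfbd : ∀ s ∈ PJ, ∀ ω, |f s ω| ≤ 1 := by
    intro s hs ω
    have h1 := h01 s hs ω
    simp only [hf]
    rw [abs_le]
    constructor <;> [linarith [h1.1, hD.2]; linarith [h1.2, hD.1]]
  have hfm : ∀ s ∈ PJ, Measurable (f s) := fun s hs => (hmeasH s hs).sub measurable_const
  have hrw : ∀ ω, ((N : ℝ)⁻¹ * ∑ s ∈ PJ, H s ω - D)^2
      = (N:ℝ)⁻¹^2 * ∑ s ∈ PJ, ∑ t ∈ PJ, f s ω * f t ω := by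
    intro ω
    have h5 : (N : ℝ)⁻¹ * ∑ s ∈ PJ, H s ω - D = (N:ℝ)⁻¹ * ∑ s ∈ PJ, f s ω := by
      rw [hf]
      simp only [Finset.sum_sub_distrib, Finset.sum_const, hNcard, nsmul_eq_mul]
      field_simp
    rw [h5, mul_pow]
    congr 1
    rw [sq, Finset.sum_mul_sum]
  have hint : ∀ s ∈ PJ, ∀ t ∈ PJ, Integrable (fun ω => f s ω * f t ω) μ := by
    intro s hs t ht
    refine integrable_of_bdd ((hfm s hs).mul (hfm t ht)) (C := 1) fun ω => ?_
    rw [abs_mul]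
    exact mul_le_one₀ (hfbd s hs ω) (abs_nonneg _) (hfbd t ht ω)
  have hIsum : ∫ ω, ((N : ℝ)⁻¹ * ∑ s ∈ PJ, H s ω - D)^2 ∂μ
      = (N:ℝ)⁻¹^2 * ∑ s ∈ PJ, ∑ t ∈ PJ, ∫ ω, f s ω * f t ω ∂μ := by
    simp_rw [hrw]
    rw [integral_const_mul]
    congr 1
    rw [integral_finset_sum _ (fun s hs => integrable_finset_sum _ (fun t ht => hint s hs t ht))]
    exact Finset.sum_congr rfl fun s hs =>
      integral_finset_sum _ (fun t ht => hint s hs t ht)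
  rw [hIsum]
  have hterm : ∀ s ∈ PJ, ∀ t ∈ PJ,
      ∫ ω, f s ω * f t ω ∂μ ≤ if Disjoint s t then 0 else 1 := by
    intro s hs t ht
    by_cases hd : Disjoint s t
    · rw [if_pos hd, hzero s hs t ht hd]
    · rw [if_neg hd]
      calc ∫ ω, f s ω * f t ω ∂μ ≤ ∫ _ω, (1:ℝ) ∂μ := by
            refine integral_mono (hint s hs t ht) (integrable_const 1) fun ω => ?_
            calc f s ω * f t ω ≤ |f s ω * f t ω| := le_abs_self _
              _ ≤ 1 := by
                  rw [abs_mul]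
                  exact mul_le_one₀ (hfbd s hs ω) (abs_nonneg _) (hfbd t ht ω)
        _ = 1 := by simp
  have hsum_bound : ∑ s ∈ PJ, ∑ t ∈ PJ, ∫ ω, f s ω * f t ω ∂μ
      ≤ (N : ℝ) * ((N : ℝ) - (n - J).choose J) := by
    calc ∑ s ∈ PJ, ∑ t ∈ PJ, ∫ ω, f s ω * f t ω ∂μ
        ≤ ∑ s ∈ PJ, ∑ t ∈ PJ, (if Disjoint s t then (0:ℝ) else 1) :=
          Finset.sum_le_sum fun s hs => Finset.sum_le_sum fun t ht => hterm s hs t ht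
      _ = ∑ s ∈ PJ, ((PJ.filter (fun t => ¬ Disjoint s t)).card : ℝ) := by
          refine Finset.sum_congr rfl fun s hs => ?_
          rw [Finset.sum_ite, Finset.sum_const_zero, zero_add, Finset.sum_const,
            nsmul_eq_mul, mul_one]
      _ = ∑ s ∈ PJ, ((N : ℝ) - (n - J).choose J) := by
          refine Finset.sum_congr rfl fun s hs => ?_
          have hc := count_disjoint hs
          rw [← hPJ] at hc
          have hsplit : (PJ.filter (fun t => Disjoint s t)).card
              + (PJ.filter (fun t => ¬ Disjoint s t)).card = N := by
            rw [Finset.card_filter_add_card_filter_not, hNcard]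
          have h6 : (PJ.filter (fun t => ¬ Disjoint s t)).card = N - (n - J).choose J := by
            omega
          rw [h6]
          have hle : (n - J).choose J ≤ N := by omega
          push_cast [Nat.cast_sub hle]
          ring
      _ = (N : ℝ) * ((N : ℝ) - (n - J).choose J) := by
          rw [Finset.sum_const, hNcard, nsmul_eq_mul]
  calc (N:ℝ)⁻¹^2 * ∑ s ∈ PJ, ∑ t ∈ PJ, ∫ ω, f s ω * f t ω ∂μ
      ≤ (N:ℝ)⁻¹^2 * ((N : ℝ) * ((N : ℝ) - (n - J).choose J)) :=
        mul_le_mul_of_nonneg_left hsum_bound (by positivity)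
    _ = ((N : ℝ) - (n - J).choose J) / N := by field_simp
    _ ≤ (J : ℝ) * ((n : ℝ) - (n - J : ℕ)) / n := choose_ratio_bound hJ hJn (Nat.sub_le n J)
    _ = (J:ℝ)^2 / n := by
        rw [Nat.cast_sub hJn]
        ring_nf

set_option synthInstance.maxHeartbeats 1000000 in
lemma exp_summand {J : ℕ} {P : Measure CI} [IsProbabilityMeasure P]
    {X : ℕ → Ω → CI} (hmeas : ∀ i, Measurable (X i))
    (hlaw : ∀ i, Measure.map (X i) μ = P)
    (hindep : ProbabilityTheory.iIndepFun X μ)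
    (x : CI) (s : Finset ℕ) (hs : s.card = J) :
    ∫ ω, ach (⋃ i ∈ s, graph (X i ω)) / ach ((⋃ i ∈ s, graph (X i ω)) ∪ graph x) ∂μ
      = ACHDepth J P x := by
  have hrw : ∀ ω, ach (⋃ i ∈ s, graph (X i ω)) / ach ((⋃ i ∈ s, graph (X i ω)) ∪ graph x)
      = achRatio (fun k => X (s.orderEmbOfFin hs k) ω) x :=
    fun ω => summand_eq_achRatio s hs (fun i => X i ω) x
  simp_rw [hrw]
  have hT : Measurable fun ω (k : Fin J) => X (s.orderEmbOfFin hs k) ω :=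
    measurable_pi_lambda _ fun k => hmeas _
  rw [ACHDepth, ← map_tuple_eq_pi hmeas hlaw hindep (fun k => s.orderEmbOfFin hs k)
    (s.orderEmbOfFin hs).injective,
    integral_map hT.aemeasurable (measurable_achRatio J x).aestronglyMeasurable]

set_option synthInstance.maxHeartbeats 1000000 in
lemma cov_zero {J : ℕ} {X : ℕ → Ω → CI} (hmeas : ∀ i, Measurable (X i))
    (hindep : ProbabilityTheory.iIndepFun X μ)
    (x : CI) (D : ℝ) (hD : D ∈ Set.Icc (0:ℝ) 1)
    (s t : Finset ℕ) (hs : s.card = J) (ht : t.card = J) (hdisj : Disjoint s t)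
    (hes : ∫ ω, ach (⋃ i ∈ s, graph (X i ω)) / ach ((⋃ i ∈ s, graph (X i ω)) ∪ graph x) ∂μ = D)
    (het : ∫ ω, ach (⋃ i ∈ t, graph (X i ω)) / ach ((⋃ i ∈ t, graph (X i ω)) ∪ graph x) ∂μ = D) :
    ∫ ω, (ach (⋃ i ∈ s, graph (X i ω)) / ach ((⋃ i ∈ s, graph (X i ω)) ∪ graph x) - D)
      * (ach (⋃ i ∈ t, graph (X i ω)) / ach ((⋃ i ∈ t, graph (X i ω)) ∪ graph x) - D) ∂μ
      = 0 := by
  classical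
  set fs : Ω → ℝ := fun ω =>
    ach (⋃ i ∈ s, graph (X i ω)) / ach ((⋃ i ∈ s, graph (X i ω)) ∪ graph x) - D with hfs
  set ft : Ω → ℝ := fun ω =>
    ach (⋃ i ∈ t, graph (X i ω)) / ach ((⋃ i ∈ t, graph (X i ω)) ∪ graph x) - D with hft
  set φ : ({i // i ∈ s} → CI) → ℝ := fun v =>
    achRatio (fun k => v ⟨s.orderEmbOfFin hs k, Finset.orderEmbOfFin_mem s hs k⟩) x - D with hφdef
  set ψ : ({i // i ∈ t} → CI) → ℝ := fun v =>
    achRatio (fun k => v ⟨t.orderEmbOfFin ht k, Finset.orderEmbOfFin_mem t ht k⟩) x - D with hψdef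
  have hφ : Measurable φ := by
    apply Measurable.sub ?_ measurable_const
    exact (measurable_achRatio J x).comp
      (measurable_pi_lambda _ fun k => measurable_pi_apply _)
  have hψ : Measurable ψ := by
    apply Measurable.sub ?_ measurable_const
    exact (measurable_achRatio J x).comp
      (measurable_pi_lambda _ fun k => measurable_pi_apply _)
  have hbase := hindep.indepFun_finset s t hdisj hmeas
  have hind := hbase.comp hφ hψ
  have hcs : (φ ∘ fun a (i : {i // i ∈ s}) => X i a) = fs := by
    funext ω
    simp only [Function.comp_apply, hφdef, hfs]
    rw [summand_eq_achRatio s hs (fun i => X i ω) x]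
  have hct : (ψ ∘ fun a (i : {i // i ∈ t}) => X i a) = ft := by
    funext ω
    simp only [Function.comp_apply, hψdef, hft]
    rw [summand_eq_achRatio t ht (fun i => X i ω) x]
  rw [hcs, hct] at hind
  have hmfs : Measurable fs := by rw [← hcs]; exact hφ.comp (measurable_pi_lambda _ fun i => hmeas i)
  have hmft : Measurable ft := by rw [← hct]; exact hψ.comp (measurable_pi_lambda _ fun i => hmeas i)
  have hbfs : ∀ ω, |fs ω| ≤ 1 := by
    intro ω
    have h1 := summand_mem_Icc (fun i => X i ω) x s
    simp only [hfs]
    rw [abs_le]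
    exact ⟨by linarith [h1.1, hD.2], by linarith [h1.2, hD.1]⟩
  have hbft : ∀ ω, |ft ω| ≤ 1 := by
    intro ω
    have h1 := summand_mem_Icc (fun i => X i ω) x t
    simp only [hft]
    rw [abs_le]
    exact ⟨by linarith [h1.1, hD.2], by linarith [h1.2, hD.1]⟩
  have hifs : Integrable fs μ := integrable_of_bdd hmfs hbfs
  have hift : Integrable ft μ := integrable_of_bdd hmft hbft
  have hmul := hind.integral_mul_eq_mul_integral hifs.aestronglyMeasurable hift.aestronglyMeasurable
  have hfs0 : ∫ ω, fs ω ∂μ = 0 := by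
    simp only [hfs]
    rw [integral_sub ?_ (integrable_const D)]
    · rw [hes]
      simp
    · have h2 : Integrable (fun ω => fs ω + D) μ :=
        hifs.add (integrable_const D)
      simp only [hfs, sub_add_cancel] at h2
      exact h2
  have hft0 : ∫ ω, ft ω ∂μ = 0 := by
    simp only [hft]
    rw [integral_sub ?_ (integrable_const D)]
    · rw [het]
      simp
    · have h2 : Integrable (fun ω => ft ω + D) μ :=
        hift.add (integrable_const D)
      simp only [hft, sub_add_cancel] at h2
      exact h2
  calc ∫ ω, (ach (⋃ i ∈ s, graph (X i ω)) / ach ((⋃ i ∈ s, graph (X i ω)) ∪ graph x) - D)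
      * (ach (⋃ i ∈ t, graph (X i ω)) / ach ((⋃ i ∈ t, graph (X i ω)) ∪ graph x) - D) ∂μ
      = ∫ ω, (fs * ft) ω ∂μ := by rfl
    _ = (∫ ω, fs ω ∂μ) * ∫ ω, ft ω ∂μ := hmul
    _ = 0 := by rw [hfs0, hft0, mul_zero]

set_option synthInstance.maxHeartbeats 1000000 in
lemma ACHDepth_mem_Icc (J : ℕ) (P : Measure CI) [IsProbabilityMeasure P] (x : CI) :
    ACHDepth J P x ∈ Set.Icc (0:ℝ) 1 := by
  constructor
  · rw [ACHDepth]
    exact integral_nonneg fun xs => (achRatio_mem_Icc xs x).1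
  · have hhint : Integrable (fun xs : Fin J → CI => achRatio xs x)
        (Measure.pi fun _ : Fin J => P) := by
      refine (integrable_const (1:ℝ)).mono'
        (measurable_achRatio J x).aestronglyMeasurable ?_
      refine Filter.Eventually.of_forall fun xs => ?_
      rw [Real.norm_eq_abs, abs_of_nonneg (achRatio_mem_Icc xs x).1]
      exact (achRatio_mem_Icc xs x).2
    rw [ACHDepth]
    calc ∫ xs, achRatio xs x ∂(Measure.pi fun _ : Fin J => P)
        ≤ ∫ _xs, (1:ℝ) ∂(Measure.pi fun _ : Fin J => P) :=
          integral_mono hhint (integrable_const 1) fun xs => (achRatio_mem_Icc xs x).2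
      _ = 1 := by simp

end Prob

set_option maxHeartbeats 2000000 in
/-- strong consistency of the empirical ACH depth. -/
theorem empDepth_consistency {Ω : Type} [MeasurableSpace Ω]
    (μ : Measure Ω) [IsProbabilityMeasure μ]
    (J : ℕ) (hJ : 1 ≤ J) (P : Measure CI) [IsProbabilityMeasure P] (x : CI)
    (X : ℕ → Ω → CI) (hmeas : ∀ i, Measurable (X i))
    (hlaw : ∀ i, Measure.map (X i) μ = P)
    (hindep : ProbabilityTheory.iIndepFun X μ) :
    ∀ᵐ ω ∂μ,
      Tendsto (fun n => |empDepth J n (fun i => X i ω) x - ACHDepth J P x|) atTop (𝓝 0) := by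
  classical
  set D : ℝ := ACHDepth J P x with hDdef
  have hD0 : 0 ≤ D := (ACHDepth_mem_Icc J P x).1
  have hD1 : D ≤ 1 := (ACHDepth_mem_Icc J P x).2
  have hexp : ∀ (s : Finset ℕ), s.card = J →
      ∫ ω, ach (⋃ i ∈ s, graph (X i ω)) / ach ((⋃ i ∈ s, graph (X i ω)) ∪ graph x) ∂μ = D :=
    fun s hs => exp_summand hmeas hlaw hindep x s hs
  have hHm : ∀ (s : Finset ℕ), s.card = J → Measurable (fun ω =>
      ach (⋃ i ∈ s, graph (X i ω)) / ach ((⋃ i ∈ s, graph (X i ω)) ∪ graph x)) := by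
    intro s hs
    have h1 : (fun ω => ach (⋃ i ∈ s, graph (X i ω))
          / ach ((⋃ i ∈ s, graph (X i ω)) ∪ graph x))
        = (fun ω => achRatio (fun k => X (s.orderEmbOfFin hs k) ω) x) :=
      funext fun ω => summand_eq_achRatio s hs (fun i => X i ω) x
    rw [h1]
    exact (measurable_achRatio J x).comp (measurable_pi_lambda _ fun k => hmeas _)
  have hZmeas : ∀ n, Measurable (fun ω => empDepth J n (fun i => X i ω) x - D) := by
    intro n
    apply Measurable.sub ?_ measurable_const
    have h1 : (fun ω => empDepth J n (fun i => X i ω) x)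
        = fun ω => (n.choose J : ℝ)⁻¹ * ∑ s ∈ Finset.powersetCard J (Finset.range n),
            ach (⋃ i ∈ s, graph (X i ω)) / ach ((⋃ i ∈ s, graph (X i ω)) ∪ graph x) := rfl
    rw [h1]
    apply Measurable.const_mul
    apply Finset.measurable_sum
    intro s hs
    exact hHm s (Finset.mem_powersetCard.1 hs).2
  have hvar : ∀ n, J ≤ n →
      ∫ ω, (empDepth J n (fun i => X i ω) x - D)^2 ∂μ ≤ (J:ℝ)^2 / n := by
    intro n hn
    exact second_moment (μ := μ) hJ hn
      (fun s ω => ach (⋃ i ∈ s, graph (X i ω)) / ach ((⋃ i ∈ s, graph (X i ω)) ∪ graph x)) D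
      (fun s hs => hHm s (Finset.mem_powersetCard.1 hs).2)
      (fun s _ ω => summand_mem_Icc (fun i => X i ω) x s)
      ⟨hD0, hD1⟩
      (fun s hs t ht hd => cov_zero hmeas hindep x D ⟨hD0, hD1⟩ s t
        (Finset.mem_powersetCard.1 hs).2 (Finset.mem_powersetCard.1 ht).2 hd
        (hexp s (Finset.mem_powersetCard.1 hs).2) (hexp t (Finset.mem_powersetCard.1 ht).2))
  have hZbd : ∀ n, J ≤ n → ∀ ω, |empDepth J n (fun i => X i ω) x - D| ≤ 1 := by
    intro n hn ω
    have h1 := empDepth_mem_Icc hn (fun i => X i ω) x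
    rw [abs_le]
    exact ⟨by linarith [h1.1], by linarith [h1.2]⟩
  -- Borel-Cantelli along squares
  have hBC : ∀ ε : ℝ, 0 < ε → ∀ᵐ ω ∂μ, ∀ᶠ k in atTop,
      |empDepth J ((k+1)^2) (fun i => X i ω) x - D| < ε := by
    intro ε hε
    set A : ℕ → Set Ω := fun k =>
      {ω | ε ≤ |empDepth J ((k+J+1)^2) (fun i => X i ω) x - D|} with hA
    have hmark : ∀ k, μ (A k) ≤ ENNReal.ofReal ((J:ℝ)^2/ε^2 * (1/((k:ℝ)+1)^2)) := by
      intro k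
      have hJn : J ≤ (k+J+1)^2 :=
        le_trans (by omega : J ≤ k+J+1) (Nat.le_self_pow two_ne_zero _)
      have hsq : A k ⊆ {ω | ε^2 ≤ (empDepth J ((k+J+1)^2) (fun i => X i ω) x - D)^2} := by
        intro ω hω
        have h2 : ε ≤ |empDepth J ((k+J+1)^2) (fun i => X i ω) x - D| := hω
        have h3 := pow_le_pow_left₀ hε.le h2 2
        rw [sq_abs] at h3
        exact h3
      have hZint : Integrable
          (fun ω => (empDepth J ((k+J+1)^2) (fun i => X i ω) x - D)^2) μ := by
        refine integrable_of_bdd ((hZmeas _).pow_const 2) (C := 1) fun ω => ?_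
        rw [abs_of_nonneg (sq_nonneg _), ← sq_abs]
        exact pow_le_one₀ (abs_nonneg _) (hZbd _ hJn ω)
      have hmv := mul_meas_ge_le_integral_of_nonneg (μ := μ)
        (Filter.Eventually.of_forall fun ω =>
          sq_nonneg (empDepth J ((k+J+1)^2) (fun i => X i ω) x - D)) hZint (ε^2)
      have hvb := hvar ((k+J+1)^2) hJn
      have hfin : μ {ω | ε^2 ≤ (empDepth J ((k+J+1)^2) (fun i => X i ω) x - D)^2} ≠ ⊤ :=
        (measure_lt_top μ _).ne
      have htoReal : (μ (A k)).toReal ≤ (J:ℝ)^2/ε^2 * (1/((k:ℝ)+1)^2) := by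
        have hm1 : (μ (A k)).toReal
            ≤ (μ {ω | ε^2 ≤ (empDepth J ((k+J+1)^2) (fun i => X i ω) x - D)^2}).toReal :=
          ENNReal.toReal_mono hfin (measure_mono hsq)
        have hε2 : (0:ℝ) < ε^2 := by positivity
        have hm2 : (μ {ω | ε^2 ≤ (empDepth J ((k+J+1)^2) (fun i => X i ω) x - D)^2}).toReal
            ≤ ((J:ℝ)^2 / ((k+J+1)^2 : ℕ)) / ε^2 := by
          rw [le_div_iff₀ hε2]
          calc (μ _).toReal * ε^2
              = ε^2 * (μ {ω | ε^2 ≤ (empDepth J ((k+J+1)^2) (fun i => X i ω) x - D)^2}).toReal := by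
                ring
            _ ≤ ∫ ω, (empDepth J ((k+J+1)^2) (fun i => X i ω) x - D)^2 ∂μ := hmv
            _ ≤ (J:ℝ)^2 / ((k+J+1)^2 : ℕ) := hvb
        have hm3 : ((J:ℝ)^2 / ((k+J+1)^2 : ℕ)) / ε^2
            ≤ (J:ℝ)^2/ε^2 * (1/((k:ℝ)+1)^2) := by
          have hc : (((k+J+1)^2 : ℕ) : ℝ) = ((k:ℝ)+J+1)^2 := by push_cast; ring
          rw [hc, div_div]
          have he : (J:ℝ)^2/ε^2 * (1/((k:ℝ)+1)^2)
              = (J:ℝ)^2 / (((k:ℝ)+J+1)^2 * ε^2)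
                * ((((k:ℝ)+J+1)^2 * ε^2) / (((k:ℝ)+1)^2 * ε^2)) := by
            field_simp
          rw [he]
          have hge1 : (1:ℝ) ≤ (((k:ℝ)+J+1)^2 * ε^2) / (((k:ℝ)+1)^2 * ε^2) := by
            rw [le_div_iff₀ (by positivity)]
            have hJR : (0:ℝ) ≤ (J:ℝ) := Nat.cast_nonneg J
            have h7 : ((k:ℝ)+1)^2 ≤ ((k:ℝ)+J+1)^2 := by nlinarith [Nat.cast_nonneg (α := ℝ) k]
            nlinarith [mul_le_mul_of_nonneg_right h7 (sq_nonneg ε)]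
          nlinarith [div_nonneg (sq_nonneg (J:ℝ))
            (le_of_lt (by positivity : (0:ℝ) < ((k:ℝ)+J+1)^2 * ε^2)), hge1]
        exact hm1.trans (hm2.trans hm3)
      calc μ (A k) = ENNReal.ofReal ((μ (A k)).toReal) := by
            rw [ENNReal.ofReal_toReal (measure_lt_top μ _).ne]
        _ ≤ ENNReal.ofReal ((J:ℝ)^2/ε^2 * (1/((k:ℝ)+1)^2)) :=
            ENNReal.ofReal_le_ofReal htoReal
    have hsummable : Summable (fun k : ℕ => (J:ℝ)^2/ε^2 * (1/((k:ℝ)+1)^2)) := by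
      apply Summable.mul_left
      have h1 : Summable (fun k : ℕ => 1 / ((k:ℝ))^2) :=
        Real.summable_one_div_nat_pow.2 one_lt_two
      have h2 := (summable_nat_add_iff 1).2 h1
      refine h2.congr fun k => ?_
      push_cast
      ring
    have hsum : ∑' k, μ (A k) ≠ ⊤ := by
      refine ne_top_of_le_ne_top ?_ (ENNReal.tsum_le_tsum hmark)
      rw [← ENNReal.ofReal_tsum_of_nonneg (fun k => by positivity) hsummable]
      exact ENNReal.ofReal_ne_top
    filter_upwards [MeasureTheory.ae_eventually_notMem hsum] with ω hω
    rw [Filter.eventually_atTop] at hω ⊢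
    obtain ⟨K, hK⟩ := hω
    refine ⟨K + J, fun k hk => ?_⟩
    have h3 := hK (k - J) (by omega)
    have h4 : k - J + J + 1 = k + 1 := by omega
    rw [hA] at h3
    simp only [Set.mem_setOf_eq, h4, not_le] at h3
    exact h3
  have haeall : ∀ᵐ ω ∂μ, ∀ p : ℕ, ∀ᶠ k in atTop,
      |empDepth J ((k+1)^2) (fun i => X i ω) x - D| < 1/((p:ℝ)+1) :=
    (MeasureTheory.ae_all_iff).2 fun p => hBC _ (by positivity)
  filter_upwards [haeall] with ω hω
  rw [Metric.tendsto_atTop]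
  intro ε hε
  obtain ⟨p, hp⟩ := exists_nat_one_div_lt (half_pos hε)
  have h5 := hω p
  rw [Filter.eventually_atTop] at h5
  obtain ⟨K₁, hK₁⟩ := h5
  obtain ⟨K₂, hK₂⟩ := exists_nat_gt (8*(J:ℝ)/ε)
  set k₀ := max (max K₁ J) K₂ with hk₀
  refine ⟨(k₀+1)^2, fun n hn => ?_⟩
  set r := Nat.sqrt n with hr
  have hrsq : r^2 ≤ n := Nat.sqrt_le' n
  have hnlt : n < (r+1)^2 := Nat.lt_succ_sqrt' n
  have hk₀r : k₀ + 1 ≤ r := by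
    by_contra hcon
    push_neg at hcon
    have h6 : (r+1)^2 ≤ (k₀+1)^2 := Nat.pow_le_pow_left (by omega) 2
    omega
  set k := r - 1 with hkdef
  have hk1 : k + 1 = r := by omega
  have hkk₀ : k₀ ≤ k := by omega
  set m := r^2 with hm
  have hJk₀ : J ≤ k₀ := le_trans (le_max_right K₁ J) (le_max_left _ K₂)
  have hJm : J ≤ m := by
    have h7 : J ≤ r := by omega
    calc J ≤ r := h7
      _ ≤ r^2 := Nat.le_self_pow two_ne_zero r
  have hmn : m ≤ n := hrsq
  have hJn : J ≤ n := hJm.trans hmn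
  rw [Real.dist_eq, sub_zero, abs_abs]
  have hterm1 : |empDepth J n (fun i => X i ω) x - empDepth J m (fun i => X i ω) x|
      ≤ 2 * ((J:ℝ) * ((n:ℝ) - m)/n) := empDepth_diff hJ hJm hmn _ x
  have hterm2 : |empDepth J m (fun i => X i ω) x - D| < ε/2 := by
    have h8 := hK₁ k (le_trans (le_trans (le_max_left K₁ J) (le_max_left _ K₂)) hkk₀)
    rw [hk1] at h8
    calc |empDepth J m (fun i => X i ω) x - D| < 1/((p:ℝ)+1) := h8
      _ < ε/2 := hp
  have hr8 : 8*(J:ℝ)/ε < (r:ℝ) := by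
    have h11 : (K₂:ℝ) ≤ (r:ℝ) := by
      have : K₂ ≤ r := by omega
      exact_mod_cast this
    linarith
  have hrR : (0:ℝ) < (r:ℝ) := by
    have h12 : (0:ℝ) ≤ 8*(J:ℝ)/ε := by positivity
    linarith
  have hnR : (0:ℝ) < (n:ℝ) := by
    have h13 : 1 ≤ n := le_trans (Nat.one_le_pow 2 r (by omega)) hmn
    exact_mod_cast h13
  have hJR : (0:ℝ) < (J:ℝ) := by exact_mod_cast hJ
  have hnm : (n:ℝ) - m ≤ 2*r := by
    have h9 : n ≤ r^2 + 2*r := by nlinarith [hnlt]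
    have h10 : ((n:ℕ):ℝ) ≤ ((r^2 + 2*r : ℕ):ℝ) := by exact_mod_cast h9
    have hmr : (m:ℝ) = (r:ℝ)^2 := by rw [hm]; push_cast; ring
    push_cast at h10
    rw [hmr]
    linarith
  have hmnR : (r:ℝ)^2 ≤ (n:ℝ) := by exact_mod_cast hrsq
  have hnmnonneg : (0:ℝ) ≤ (n:ℝ) - m := by
    have := hmn
    have h14 : ((m:ℕ):ℝ) ≤ ((n:ℕ):ℝ) := by exact_mod_cast this
    linarith
  have hfrac : (J:ℝ) * ((n:ℝ)-m) / n ≤ (J:ℝ) * (2*r) / (r:ℝ)^2 := by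
    apply div_le_div₀ (by positivity) ?_ (by positivity) hmnR
    exact mul_le_mul_of_nonneg_left hnm hJR.le
  have hsimp : (J:ℝ) * (2*r) / (r:ℝ)^2 = 2*(J:ℝ)/r := by
    rw [sq]
    field_simp
  have hbound1 : 2 * ((J:ℝ) * ((n:ℝ) - m)/n) < ε/2 := by
    have h15 : (J:ℝ) * ((n:ℝ)-m)/n ≤ 2*(J:ℝ)/r := by rw [← hsimp]; exact hfrac
    have h16 : 2*(J:ℝ)/r < ε/4 := by
      rw [div_lt_iff₀ hrR]
      rw [div_lt_iff₀ hε] at hr8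
      linarith
    linarith
  calc |empDepth J n (fun i => X i ω) x - D|
      ≤ |empDepth J n (fun i => X i ω) x - empDepth J m (fun i => X i ω) x|
        + |empDepth J m (fun i => X i ω) x - D| := abs_sub_le _ _ _
    _ < ε := by
        have := hterm1
        linarith

end
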